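/- Let Φ_N, Φ_{N−1} ∈ SL₂(ℝ) with Φ_N = T Φ_{N−1} for some T ∈ SL₂(ℝ). Write the singular value decompositions Φ_N = U_N diag(s_N, s_N^{-1}) V_N and Φ_{N−1} = U_{N−1} diag(s_{N−1}, s_{N−1}^{-1}) V_{N−1} with s_N, s_{N−1} ≥ 1 and U's, V's in SO(2). Let θ be the angle defined by V_N* e₂ = cos θ · V_{N−1}* e₂ + sin θ · V_{N−1}* e₁. Then |sin θ| ≤ ‖T‖ / (‖Φ_N‖ · ‖Φ_{N−1}‖). -/

import Mathlib

open scoped Matrix.Norms.L2Operator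
set_option maxHeartbeats 1000000

open Matrix
noncomputable abbrev g (A : Matrix (Fin 2) (Fin 2) ℝ) := Matrix.toEuclideanCLM (𝕜 := ℝ) A

lemma aux_inner (A : Matrix (Fin 2) (Fin 2) ℝ) (hA : Aᵀ * A = 1)
    (x y : EuclideanSpace ℝ (Fin 2)) :
    (inner ℝ (g A x) (g A y) : ℝ) = inner ℝ x y := by
  have hstar : star A = Aᵀ := by
    ext i j; simp [Matrix.star_apply]
  have hadj : ContinuousLinearMap.adjoint (g A) = g Aᵀ := by
    rw [← ContinuousLinearMap.star_eq_adjoint, ← map_star, hstar]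
  calc (inner ℝ (g A x) (g A y) : ℝ) = inner ℝ x (ContinuousLinearMap.adjoint (g A) (g A y)) := by
        rw [ContinuousLinearMap.adjoint_inner_right]
    _ = inner ℝ x (g (Aᵀ * A) y) := by
        have hm : g (Aᵀ * A) = g Aᵀ * g A := _root_.map_mul _ _ _
        rw [hadj, hm]; rfl
    _ = inner ℝ x y := by
        have h1 : g (Aᵀ * A) = 1 := by rw [hA]; exact _root_.map_one _
        rw [h1]; rfl

lemma aux_norm (A : Matrix (Fin 2) (Fin 2) ℝ) (hA : Aᵀ * A = 1) (x : EuclideanSpace ℝ (Fin 2)) :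
    ‖g A x‖ = ‖x‖ := by
  have := aux_inner A hA x x
  rw [real_inner_self_eq_norm_sq, real_inner_self_eq_norm_sq] at this
  nlinarith [norm_nonneg (g A x), norm_nonneg x]

lemma aux_diag (d : Fin 2 → ℝ) (i : Fin 2) (c : ℝ) :
    g (Matrix.diagonal d) (EuclideanSpace.single i c) = d i • EuclideanSpace.single i c := by
  ext j
  have : g (Matrix.diagonal d) (EuclideanSpace.single i c) j
      = (Matrix.diagonal d *ᵥ (EuclideanSpace.single i c : Fin 2 → ℝ)) j := rfl
  rw [this, Matrix.mulVec_diagonal]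
  simp [EuclideanSpace.single_apply]
  by_cases h : j = i <;> simp [h]

lemma aux_diag_norm (s : ℝ) (hs : 1 ≤ s) (x : EuclideanSpace ℝ (Fin 2)) :
    ‖g (Matrix.diagonal ![s, s⁻¹]) x‖ ≤ s * ‖x‖ := by
  have hs0 : 0 < s := lt_of_lt_of_le one_pos hs
  have hinv : s⁻¹ ≤ s := le_trans (inv_le_one_of_one_le₀ hs) hs
  have hinv0 : 0 < s⁻¹ := inv_pos.mpr hs0
  have hx : ∀ j, g (Matrix.diagonal ![s, s⁻¹]) x j = (![s, s⁻¹] j) * x j := by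
    intro j
    have h0 : g (Matrix.diagonal ![s, s⁻¹]) x j
        = (Matrix.diagonal ![s, s⁻¹] *ᵥ (x : Fin 2 → ℝ)) j := rfl
    rw [h0, Matrix.mulVec_diagonal]
  rw [EuclideanSpace.norm_eq, EuclideanSpace.norm_eq]
  have key : (∑ j, ‖g (Matrix.diagonal ![s, s⁻¹]) x j‖ ^ 2)
      ≤ s ^ 2 * ∑ j, ‖x j‖ ^ 2 := by
    simp only [Fin.sum_univ_two, hx, Real.norm_eq_abs, sq_abs]
    have h1 : (![s, s⁻¹] 0) = s := rfl
    have h2 : (![s, s⁻¹] 1) = s⁻¹ := rfl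
    rw [h1, h2]
    nlinarith [mul_self_le_mul_self hinv0.le hinv, sq_nonneg (x 1)]
  calc √(∑ j, ‖g (Matrix.diagonal ![s, s⁻¹]) x j‖ ^ 2)
      ≤ √(s ^ 2 * ∑ j, ‖x j‖ ^ 2) := Real.sqrt_le_sqrt key
    _ = s * √(∑ j, ‖x j‖ ^ 2) := by
        rw [Real.sqrt_mul (sq_nonneg s), Real.sqrt_sq hs0.le]

lemma aux_opnorm_le_one (A : Matrix (Fin 2) (Fin 2) ℝ) (hA : Aᵀ * A = 1) : ‖g A‖ ≤ 1 :=
  ContinuousLinearMap.opNorm_le_bound _ zero_le_one (fun x => by rw [aux_norm A hA, one_mul])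

lemma aux_comp (A B : Matrix (Fin 2) (Fin 2) ℝ) (x : EuclideanSpace ℝ (Fin 2)) :
    g (A * B) x = g A (g B x) := by
  have hm : g (A * B) = g A * g B := _root_.map_mul _ _ _
  rw [hm]; rfl

lemma aux_svd_apply (U V : Matrix (Fin 2) (Fin 2) ℝ) (hV : Vᵀ * V = 1) (s : ℝ)
    (i : Fin 2) :
    g (U * Matrix.diagonal ![s, s⁻¹] * V) (g Vᵀ (EuclideanSpace.single i 1)) =
      (![s, s⁻¹] i) • g U (EuclideanSpace.single i 1) := by
  have hVo : V * Vᵀ = 1 := mul_eq_one_comm.mp hV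
  rw [aux_comp, ← aux_comp V Vᵀ, hVo]
  have h1 : g (1 : Matrix (Fin 2) (Fin 2) ℝ) = 1 := _root_.map_one _
  rw [h1]
  show g (U * Matrix.diagonal ![s, s⁻¹]) (EuclideanSpace.single i 1) = _
  rw [aux_comp, aux_diag]; exact _root_.map_smul (g U) _ _



/-- If `Φ_N = T Φ_{N−1}` in `SL₂(ℝ)`, with singular value decompositions
`Φ_N = U_N diag(s_N, 1/s_N) V_N`, `Φ_{N−1} = U' diag(s', 1/s') V'` and `θ` defined
by `V_N* e₂ = cos θ · V'* e₂ + sin θ · V'* e₁`, then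
`|sin θ| ≤ ‖T‖ / (‖Φ_N‖ ‖Φ_{N−1}‖)`. -/
theorem stmt8 (T ΦN ΦN' UN VN UN' VN' : Matrix (Fin 2) (Fin 2) ℝ)
    (hdetT : T.det = 1) (hdetN : ΦN.det = 1) (hdetN' : ΦN'.det = 1)
    (hprod : ΦN = T * ΦN')
    (hUN : UN.transpose * UN = 1) (hUNdet : UN.det = 1)
    (hVN : VN.transpose * VN = 1) (hVNdet : VN.det = 1)
    (hUN' : UN'.transpose * UN' = 1) (hUN'det : UN'.det = 1)
    (hVN' : VN'.transpose * VN' = 1) (hVN'det : VN'.det = 1)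
    (sN sN' : ℝ) (hsN : 1 ≤ sN) (hsN' : 1 ≤ sN')
    (hsvdN : ΦN = UN * Matrix.diagonal ![sN, sN⁻¹] * VN)
    (hsvdN' : ΦN' = UN' * Matrix.diagonal ![sN', sN'⁻¹] * VN')
    (θ : ℝ)
    (hθ : Matrix.toEuclideanCLM (𝕜 := ℝ) VN.transpose (EuclideanSpace.single 1 1) =
      Real.cos θ • Matrix.toEuclideanCLM (𝕜 := ℝ) VN'.transpose (EuclideanSpace.single 1 1) +
      Real.sin θ • Matrix.toEuclideanCLM (𝕜 := ℝ) VN'.transpose (EuclideanSpace.single 0 1)) :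
    |Real.sin θ| ≤ ‖Matrix.toEuclideanCLM (𝕜 := ℝ) T‖ /
      (‖Matrix.toEuclideanCLM (𝕜 := ℝ) ΦN‖ * ‖Matrix.toEuclideanCLM (𝕜 := ℝ) ΦN'‖) := by
  show |Real.sin θ| ≤ ‖g T‖ / (‖g ΦN‖ * ‖g ΦN'‖)
  have hsN0 : (0:ℝ) < sN := lt_of_lt_of_le one_pos hsN
  have hsN'0 : (0:ℝ) < sN' := lt_of_lt_of_le one_pos hsN'
  have hVNT : (VNᵀ)ᵀ * VNᵀ = 1 := by
    rw [Matrix.transpose_transpose]; exact mul_eq_one_comm.mp hVN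
  have hVN'T : (VN'ᵀ)ᵀ * VN'ᵀ = 1 := by
    rw [Matrix.transpose_transpose]; exact mul_eq_one_comm.mp hVN'
  set e0 : EuclideanSpace ℝ (Fin 2) := EuclideanSpace.single 0 1 with he0
  set e1 : EuclideanSpace ℝ (Fin 2) := EuclideanSpace.single 1 1 with he1
  have hne0 : ‖e0‖ = 1 := by rw [he0, EuclideanSpace.norm_single]; norm_num
  have hne1 : ‖e1‖ = 1 := by rw [he1, EuclideanSpace.norm_single]; norm_num
  set v : EuclideanSpace ℝ (Fin 2) := g VNᵀ e1 with hv
  -- Step 1 : ‖g ΦN v‖ = sN⁻¹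
  have hΦNv : g ΦN v = sN⁻¹ • g UN e1 := by
    rw [hv, hsvdN]
    have h := aux_svd_apply UN VN hVN sN 1
    have h2 : (![sN, sN⁻¹] (1 : Fin 2)) = sN⁻¹ := rfl
    rw [h2] at h
    exact h
  have hΦNvnorm : ‖g ΦN v‖ = sN⁻¹ := by
    rw [hΦNv, norm_smul, aux_norm UN hUN, hne1, Real.norm_eq_abs,
      abs_of_pos (inv_pos.mpr hsN0), mul_one]
  have hnv : ‖v‖ = 1 := by rw [hv, aux_norm _ hVNT, hne1]
  -- Step 2 : |sin θ| * sN' ≤ ‖g ΦN' v‖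
  have hw1 : g ΦN' (g VN'ᵀ e1) = sN'⁻¹ • g UN' e1 := by
    rw [hsvdN']
    have h := aux_svd_apply UN' VN' hVN' sN' 1
    have h2 : (![sN', sN'⁻¹] (1 : Fin 2)) = sN'⁻¹ := rfl
    rw [h2] at h; exact h
  have hw0 : g ΦN' (g VN'ᵀ e0) = sN' • g UN' e0 := by
    rw [hsvdN']
    have h := aux_svd_apply UN' VN' hVN' sN' 0
    have h2 : (![sN', sN'⁻¹] (0 : Fin 2)) = sN' := rfl
    rw [h2] at h; exact h
  have hvdec : v = Real.cos θ • g VN'ᵀ e1 + Real.sin θ • g VN'ᵀ e0 := hθ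
  have hΦN'v : g ΦN' v = (Real.cos θ * sN'⁻¹) • g UN' e1 + (Real.sin θ * sN') • g UN' e0 := by
    rw [hvdec, map_add, ContinuousLinearMap.map_smul, ContinuousLinearMap.map_smul, hw1, hw0,
      smul_smul, smul_smul]
  have hinner : (inner ℝ (g ΦN' v) (g UN' e0) : ℝ) = Real.sin θ * sN' := by
    rw [hΦN'v, inner_add_left, real_inner_smul_left, real_inner_smul_left,
      aux_inner UN' hUN', aux_inner UN' hUN', he0, he1]
    simp [EuclideanSpace.inner_single_left, EuclideanSpace.single_apply]
  have hstep2 : |Real.sin θ| * sN' ≤ ‖g ΦN' v‖ := by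
    have h := abs_real_inner_le_norm (g ΦN' v) (g UN' e0)
    rw [hinner, aux_norm UN' hUN', hne0, mul_one, abs_mul, abs_of_pos hsN'0] at h
    exact h
  -- Step 3 : lower bound for g T
  set J : Matrix (Fin 2) (Fin 2) ℝ := !![0,-1;1,0] with hJdef
  have hJT : Jᵀ = !![(0:ℝ),1;-1,0] := by
    rw [hJdef]; ext i j; fin_cases i <;> fin_cases j <;> rfl
  have hJ : Jᵀ * J = 1 := by
    rw [hJT, hJdef, Matrix.mul_fin_two, Matrix.one_fin_two]
    norm_num
  have hdet2 : T 0 0 * T 1 1 - T 0 1 * T 1 0 = 1 := by rw [← Matrix.det_fin_two]; exact hdetT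
  set S := J * Tᵀ * Jᵀ with hSdef
  have hTt : Tᵀ = !![T 0 0, T 1 0; T 0 1, T 1 1] := by
    ext i j; fin_cases i <;> fin_cases j <;> rfl
  have hS2 : S = !![T 1 1, -(T 0 1); -(T 1 0), T 0 0] := by
    rw [hSdef, hJT, hJdef, hTt, Matrix.mul_fin_two, Matrix.mul_fin_two]
    ext i j
    fin_cases i <;> fin_cases j <;>
      simp [Matrix.cons_val_zero, Matrix.cons_val_one, Matrix.head_cons] <;> ring
  have hST : S * T = 1 := by
    ext i j
    fin_cases i <;> fin_cases j <;>
      simp [hS2, Matrix.mul_apply, Fin.sum_univ_two, Matrix.one_apply] <;> linarith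
  have hJo : ‖g J‖ ≤ 1 := aux_opnorm_le_one J hJ
  have hJTo : ‖g Jᵀ‖ ≤ 1 := aux_opnorm_le_one Jᵀ
    (by rw [Matrix.transpose_transpose]; exact mul_eq_one_comm.mp hJ)
  have hCT : Tᴴ = Tᵀ := by ext i j; simp [Matrix.conjTranspose_apply]
  have hTT : ‖g Tᵀ‖ = ‖g T‖ := by
    calc ‖g Tᵀ‖ = ‖Tᵀ‖ := (Matrix.cstar_norm_def Tᵀ).symm
      _ = ‖Tᴴ‖ := by rw [hCT]
      _ = ‖T‖ := Matrix.l2_opNorm_conjTranspose T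
      _ = ‖g T‖ := Matrix.cstar_norm_def T
  have hSnorm : ‖g S‖ ≤ ‖g T‖ := by
    have ha : g (J * Tᵀ * Jᵀ) = g (J * Tᵀ) * g Jᵀ := _root_.map_mul _ _ _
    have hb : g (J * Tᵀ) = g J * g Tᵀ := _root_.map_mul _ _ _
    have h1 : g S = g J * g Tᵀ * g Jᵀ := by rw [hSdef, ha, hb]
    rw [h1]
    calc ‖g J * g Tᵀ * g Jᵀ‖ ≤ ‖g J * g Tᵀ‖ * ‖g Jᵀ‖ := norm_mul_le _ _
      _ ≤ (‖g J‖ * ‖g Tᵀ‖) * ‖g Jᵀ‖ :=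
          mul_le_mul_of_nonneg_right (norm_mul_le _ _) (norm_nonneg _)
      _ ≤ (1 * ‖g T‖) * 1 := by
          apply mul_le_mul (mul_le_mul hJo (le_of_eq hTT) (norm_nonneg _) zero_le_one) hJTo
            (norm_nonneg _) (by positivity)
      _ = ‖g T‖ := by ring
  have hTlow : ∀ x : EuclideanSpace ℝ (Fin 2), ‖x‖ ≤ ‖g T‖ * ‖g T x‖ := by
    intro x
    have h1 : g S (g T x) = x := by
      rw [← aux_comp, hST]
      have hone : g (1 : Matrix (Fin 2) (Fin 2) ℝ) = 1 := _root_.map_one _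
      rw [hone]; rfl
    calc ‖x‖ = ‖g S (g T x)‖ := by rw [h1]
      _ ≤ ‖g S‖ * ‖g T x‖ := (g S).le_opNorm _
      _ ≤ ‖g T‖ * ‖g T x‖ := mul_le_mul_of_nonneg_right hSnorm (norm_nonneg _)
  -- Step 4 : key inequality
  have hkey : |Real.sin θ| * sN' ≤ ‖g T‖ * sN⁻¹ := by
    have h1 : g ΦN v = g T (g ΦN' v) := by rw [hprod, aux_comp]
    have h2 := hTlow (g ΦN' v)
    rw [← h1, hΦNvnorm] at h2
    exact le_trans hstep2 h2
  have hsin : |Real.sin θ| ≤ ‖g T‖ / (sN * sN') := by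
    rw [le_div_iff₀ (by positivity)]
    calc |Real.sin θ| * (sN * sN') = (|Real.sin θ| * sN') * sN := by ring
      _ ≤ (‖g T‖ * sN⁻¹) * sN := mul_le_mul_of_nonneg_right hkey hsN0.le
      _ = ‖g T‖ := by field_simp
  -- Step 5 : upper bounds on the norms
  have hD : ‖g (Matrix.diagonal ![sN, sN⁻¹])‖ ≤ sN :=
    ContinuousLinearMap.opNorm_le_bound _ hsN0.le (aux_diag_norm sN hsN)
  have hD' : ‖g (Matrix.diagonal ![sN', sN'⁻¹])‖ ≤ sN' :=
    ContinuousLinearMap.opNorm_le_bound _ hsN'0.le (aux_diag_norm sN' hsN')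
  have hb1 : ‖g ΦN‖ ≤ sN := by
    have ha : g (UN * Matrix.diagonal ![sN, sN⁻¹] * VN)
        = g (UN * Matrix.diagonal ![sN, sN⁻¹]) * g VN := _root_.map_mul _ _ _
    have hb : g (UN * Matrix.diagonal ![sN, sN⁻¹])
        = g UN * g (Matrix.diagonal ![sN, sN⁻¹]) := _root_.map_mul _ _ _
    rw [hsvdN, ha, hb]
    calc ‖g UN * g (Matrix.diagonal ![sN, sN⁻¹]) * g VN‖
        ≤ ‖g UN * g (Matrix.diagonal ![sN, sN⁻¹])‖ * ‖g VN‖ := norm_mul_le _ _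
      _ ≤ (‖g UN‖ * ‖g (Matrix.diagonal ![sN, sN⁻¹])‖) * ‖g VN‖ :=
          mul_le_mul_of_nonneg_right (norm_mul_le _ _) (norm_nonneg _)
      _ ≤ (1 * sN) * 1 := by
          apply mul_le_mul (mul_le_mul (aux_opnorm_le_one UN hUN) hD (norm_nonneg _) zero_le_one)
            (aux_opnorm_le_one VN hVN) (norm_nonneg _) (by positivity)
      _ = sN := by ring
  have hb1' : ‖g ΦN'‖ ≤ sN' := by
    have ha : g (UN' * Matrix.diagonal ![sN', sN'⁻¹] * VN')
        = g (UN' * Matrix.diagonal ![sN', sN'⁻¹]) * g VN' := _root_.map_mul _ _ _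
    have hb : g (UN' * Matrix.diagonal ![sN', sN'⁻¹])
        = g UN' * g (Matrix.diagonal ![sN', sN'⁻¹]) := _root_.map_mul _ _ _
    rw [hsvdN', ha, hb]
    calc ‖g UN' * g (Matrix.diagonal ![sN', sN'⁻¹]) * g VN'‖
        ≤ ‖g UN' * g (Matrix.diagonal ![sN', sN'⁻¹])‖ * ‖g VN'‖ := norm_mul_le _ _
      _ ≤ (‖g UN'‖ * ‖g (Matrix.diagonal ![sN', sN'⁻¹])‖) * ‖g VN'‖ :=
          mul_le_mul_of_nonneg_right (norm_mul_le _ _) (norm_nonneg _)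
      _ ≤ (1 * sN') * 1 := by
          apply mul_le_mul (mul_le_mul (aux_opnorm_le_one UN' hUN') hD' (norm_nonneg _) zero_le_one)
            (aux_opnorm_le_one VN' hVN') (norm_nonneg _) (by positivity)
      _ = sN' := by ring
  -- positivity of the norms
  have hp1 : 0 < ‖g ΦN‖ := by
    have h := (g ΦN).le_opNorm v
    rw [hΦNvnorm, hnv, mul_one] at h
    exact lt_of_lt_of_le (inv_pos.mpr hsN0) h
  have hp1' : 0 < ‖g ΦN'‖ := by
    have h := (g ΦN').le_opNorm (g VN'ᵀ e1)
    rw [hw1, aux_norm _ hVN'T, hne1, mul_one] at h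
    rw [norm_smul, aux_norm UN' hUN', hne1, Real.norm_eq_abs,
      abs_of_pos (inv_pos.mpr hsN'0), mul_one] at h
    exact lt_of_lt_of_le (inv_pos.mpr hsN'0) h
  -- conclusion
  refine le_trans hsin ?_
  gcongr ‖g T‖ / ?_ <;>
    first
      | exact mul_pos hp1 hp1'
      | exact mul_le_mul hb1 hb1' (norm_nonneg _) hsN0.le
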